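/- Let F be a finite index set, V a finite set of Boolean variables, and for each p ∈ F let C_p be a CNF formula over V having at least 1 and at most 2 clauses, and D_p a predicate on assignments σ : V → Bool such that σ satisfies C_p if and only if D_p σ holds. For an assignment σ let δ(σ) be the number of p ∈ F with D_p σ, and let SAT(σ) be the total number, summed over p ∈ F, of clauses of C_p made true by σ. Suppose ρ > 0 and α ≥ 1 are real numbers, the minimum over all assignments of δ is at least |F|/ρ, and σ* is an assignment with SAT(σ*) ≤ α · (minimum over all assignments of SAT). Then δ(σ*) ≤ α(1+ρ) · (minimum over all assignments of δ). -/

import Mathlib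

/-- A literal is a pair (variable, polarity); it is true under `σ` iff `σ`
maps the variable to the polarity.  A clause (list of literals) is made true
by `σ` iff some of its literals is true under `σ`. -/
def clauseTrue {V : Type} (σ : V → Bool) (cl : List (V × Bool)) : Bool :=
  cl.any fun l => σ l.1 == l.2

/-- Total number, over all indices `p`, of clauses of the CNF formula `C p`
made true by the assignment `σ`. -/
def satCount {F V : Type} [Fintype F] (C : F → List (List (V × Bool)))
    (σ : V → Bool) : ℕ :=
  ∑ p : F, (C p).countP (clauseTrue σ)

/-- Number of indices `p` such that the predicate `D p` holds of `σ`. -/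
noncomputable def dCount {F V : Type} [Fintype F] (D : F → (V → Bool) → Prop)
    (σ : V → Bool) : ℕ :=
  Nat.card {p : F // D p σ}

open Classical in
lemma dCount_eq_sum {F V : Type} [Fintype F] (D : F → (V → Bool) → Prop)
    (σ : V → Bool) :
    dCount D σ = ∑ p : F, (if D p σ then 1 else 0) := by
  classical
  rw [dCount, Nat.card_eq_fintype_card, Fintype.card_subtype, Finset.card_filter]

lemma dCount_le_satCount {F V : Type} [Fintype F]
    (C : F → List (List (V × Bool))) (D : F → (V → Bool) → Prop)
    (hlen : ∀ p, 1 ≤ (C p).length ∧ (C p).length ≤ 2)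
    (hiff : ∀ p σ, (∀ cl ∈ C p, clauseTrue σ cl = true) ↔ D p σ)
    (σ : V → Bool) : dCount D σ ≤ satCount C σ := by
  classical
  rw [dCount_eq_sum, satCount]
  refine Finset.sum_le_sum fun p _ => ?_
  split_ifs with h
  · have hall : ∀ cl ∈ C p, clauseTrue σ cl = true := (hiff p σ).mpr h
    have : (C p).countP (clauseTrue σ) = (C p).length :=
      List.countP_eq_length.mpr hall
    have := (hlen p).1; omega
  · exact Nat.zero_le _

lemma satCount_le {F V : Type} [Fintype F]
    (C : F → List (List (V × Bool))) (D : F → (V → Bool) → Prop)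
    (hlen : ∀ p, 1 ≤ (C p).length ∧ (C p).length ≤ 2)
    (hiff : ∀ p σ, (∀ cl ∈ C p, clauseTrue σ cl = true) ↔ D p σ)
    (σ : V → Bool) : satCount C σ ≤ Fintype.card F + dCount D σ := by
  classical
  rw [dCount_eq_sum, satCount, ← Finset.card_univ, Finset.card_eq_sum_ones,
    ← Finset.sum_add_distrib]
  refine Finset.sum_le_sum fun p _ => ?_
  have hle : (C p).countP (clauseTrue σ) ≤ (C p).length := List.countP_le_length
  split_ifs with h
  · have := (hlen p).2; omega
  · have hne : (C p).countP (clauseTrue σ) ≠ (C p).length := fun he =>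
      h ((hiff p σ).mp (List.countP_eq_length.mp he))
    have := (hlen p).2; omega

theorem approx_transfer_min2sat {F V : Type} [Fintype F] [Fintype V]
    (C : F → List (List (V × Bool))) (D : F → (V → Bool) → Prop)
    (hlen : ∀ p, 1 ≤ (C p).length ∧ (C p).length ≤ 2)
    (hiff : ∀ p σ, (∀ cl ∈ C p, clauseTrue σ cl = true) ↔ D p σ)
    (ρ α : ℝ) (hρ : 0 < ρ) (hα : 1 ≤ α)
    (hmin : (Fintype.card F : ℝ) / ρ ≤ ((sInf (Set.range (dCount D)) : ℕ) : ℝ))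
    (σstar : V → Bool)
    (happrox : (satCount C σstar : ℝ) ≤
      α * ((sInf (Set.range (satCount C)) : ℕ) : ℝ)) :
    (dCount D σstar : ℝ) ≤
      α * (1 + ρ) * ((sInf (Set.range (dCount D)) : ℕ) : ℝ) := by
  classical
  set minD := sInf (Set.range (dCount D)) with hminD
  set minS := sInf (Set.range (satCount C)) with hminS
  -- there is an assignment attaining minD
  have hne : (Set.range (dCount D)).Nonempty := ⟨_, ⟨fun _ => true, rfl⟩⟩
  obtain ⟨σd, hσd⟩ : ∃ σd, dCount D σd = minD := Nat.sInf_mem hne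
  -- minS ≤ satCount C σd
  have h1 : minS ≤ satCount C σd := Nat.sInf_le ⟨σd, rfl⟩
  have h2 : satCount C σd ≤ Fintype.card F + minD := by
    rw [← hσd]; exact satCount_le C D hlen hiff σd
  have h3 : dCount D σstar ≤ satCount C σstar :=
    dCount_le_satCount C D hlen hiff σstar
  have hm : (Fintype.card F : ℝ) ≤ ρ * minD := by
    have := (div_le_iff₀ hρ).mp hmin
    linarith [this]
  have hα0 : (0 : ℝ) ≤ α := by linarith
  calc (dCount D σstar : ℝ) ≤ (satCount C σstar : ℝ) := by exact_mod_cast h3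
    _ ≤ α * minS := happrox
    _ ≤ α * (satCount C σd : ℝ) := by
        have : (minS : ℝ) ≤ (satCount C σd : ℝ) := by exact_mod_cast h1
        exact mul_le_mul_of_nonneg_left this hα0
    _ ≤ α * ((Fintype.card F : ℝ) + minD) := by
        have : (satCount C σd : ℝ) ≤ (Fintype.card F : ℝ) + minD := by
          exact_mod_cast h2
        exact mul_le_mul_of_nonneg_left this hα0
    _ ≤ α * (ρ * minD + minD) := by
        refine mul_le_mul_of_nonneg_left (by linarith) hα0
    _ = α * (1 + ρ) * minD := by ring
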